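/- Let E be a real Banach space, a ∈ E, and let ℓ be a bounded linear functional on the Banach space of continuous bilinear forms E × E → ℝ (identified with E →L E →L ℝ) which vanishes on every decomposable form (x,y) ↦ φ(x)·ψ(y) for continuous linear functionals φ, ψ : E → ℝ. Then for all twice continuously differentiable functions f, g : E → ℝ one has ℓ(D²(f·g)(a)) = ℓ(D²f(a))·g(a) + f(a)·ℓ(D²g(a)); that is, f ↦ ℓ(D²f(a)) is a derivation over evaluation at a (an operational tangent vector). -/

import Mathlib

/-- A bounded linear functional on bilinear forms vanishing on decomposable forms
yields a derivation over evaluation at `a` via the second derivative. -/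
theorem second_order_operational_tangent_vector {E : Type*}
    [NormedAddCommGroup E] [NormedSpace ℝ E] [CompleteSpace E] (a : E)
    (l : (E →L[ℝ] E →L[ℝ] ℝ) →L[ℝ] ℝ)
    (hl : ∀ φ ψ : E →L[ℝ] ℝ, l (φ.smulRight ψ) = 0)
    (f g : E → ℝ) (hf : ContDiff ℝ 2 f) (hg : ContDiff ℝ 2 g) :
    l (fderiv ℝ (fderiv ℝ (fun x => f x * g x)) a) =
      l (fderiv ℝ (fderiv ℝ f) a) * g a + f a * l (fderiv ℝ (fderiv ℝ g) a) := by
  have hf1 : Differentiable ℝ f := hf.differentiable two_ne_zero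
  have hg1 : Differentiable ℝ g := hg.differentiable two_ne_zero
  have hf' : ContDiff ℝ 1 (fderiv ℝ f) := hf.fderiv_right le_rfl
  have hg' : ContDiff ℝ 1 (fderiv ℝ g) := hg.fderiv_right le_rfl
  have hDf : DifferentiableAt ℝ (fderiv ℝ f) a := (hf'.differentiable one_ne_zero) a
  have hDg : DifferentiableAt ℝ (fderiv ℝ g) a := (hg'.differentiable one_ne_zero) a
  have key : fderiv ℝ (fun x => f x * g x) =
      fun x => f x • fderiv ℝ g x + g x • fderiv ℝ f x := by
    funext x
    exact fderiv_mul (hf1 x) (hg1 x)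
  rw [key]
  have h1 : fderiv ℝ (fun x => f x • fderiv ℝ g x) a =
      f a • fderiv ℝ (fderiv ℝ g) a + (fderiv ℝ f a).smulRight (fderiv ℝ g a) :=
    fderiv_smul (hf1 a) hDg
  have h2 : fderiv ℝ (fun x => g x • fderiv ℝ f x) a =
      g a • fderiv ℝ (fderiv ℝ f) a + (fderiv ℝ g a).smulRight (fderiv ℝ f a) :=
    fderiv_smul (hg1 a) hDf
  have hd1 : DifferentiableAt ℝ (fun x => f x • fderiv ℝ g x) a :=
    (hf1 a).smul hDg
  have hd2 : DifferentiableAt ℝ (fun x => g x • fderiv ℝ f x) a :=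
    (hg1 a).smul hDf
  rw [fderiv_fun_add hd1 hd2, map_add, h1, h2, map_add, map_add, map_smul, map_smul,
    hl, hl]
  simp only [smul_eq_mul]; ring
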